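/- Let k ≥ 2 be an integer, let w be a word of length n over an alphabet Σ, let f : Σ → Σ be an involution and φ the induced antimorphic involution on words. Let i, p be positive integers with i + kp − 1 ≤ n and set x = w[i..i+p−1]. Then w[i..i+kp−1] equals the concatenation b_1 b_2 ⋯ b_k, where b_j = x for odd j and b_j = φ(x) for even j, if and only if cmp_w[i + jp − 1] ≥ p for every j with 1 ≤ j ≤ k−1. -/

import Mathlib

open List

/-- `x^k`: concatenation of `k` copies of the word `x`. -/
def listPow {α : Type*} (x : List α) (k : ℕ) : List α := (List.replicate k x).flatten

/-- Minimal period `mp_s^k(u)` taking values in `ℕ∞`: the least `m > s` such that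
the prefix of `u` of length `k*m` is the `k`-th power of the prefix of length `m`;
`⊤` if no such `m` exists. -/
noncomputable def minPeriod {α : Type*} (k s : ℕ) (u : List α) : ℕ∞ :=
  sInf {N : ℕ∞ | ∃ m : ℕ, N = (m : ℕ∞) ∧ s < m ∧ k * m ≤ u.length ∧
    listPow (u.take m) k <+: u}

/-- Length of the longest common prefix of two words. -/
def lcpLen {α : Type*} [DecidableEq α] (a b : List α) : ℕ :=
  ((a.zip b).takeWhile fun p => decide (p.1 = p.2)).length

/-- The antimorphic involution on words induced by a letter map `f`. -/
def phi {α : Type*} (f : α → α) (u : List α) : List α := (u.map f).reverse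

/-- Centralized maximal pseudo-palindrome array entry `cmp_w[i]`. -/
noncomputable def cmpArr {α : Type*} (f : α → α) (w : List α) (i : ℕ) : ℕ :=
  sSup {m : ℕ | m ≤ min i (w.length - i) ∧
    phi f ((w.drop (i - m)).take m) = (w.drop i).take m}

section Aux

variable {α : Type*}

lemma phi_length (f : α → α) (u : List α) : (phi f u).length = u.length := by
  simp [phi]

lemma phi_phi {f : α → α} (hf : Function.Involutive f) (u : List α) :
    phi f (phi f u) = u := by
  simp [phi, List.map_reverse, List.map_map, hf.comp_self]

/-- downward closedness of the pseudo-palindromic extension condition -/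
lemma phi_cond_mono (f : α → α) (w : List α) {c m m' : ℕ}
    (hm' : m' ≤ m) (hmc : m ≤ c) (hcn : c ≤ w.length)
    (h : phi f ((w.drop (c - m)).take m) = (w.drop c).take m) :
    phi f ((w.drop (c - m')).take m') = (w.drop c).take m' := by
  have hu : ((w.drop (c - m)).take m).length = m := by
    simp only [List.length_take, List.length_drop]
    omega
  have h2 := congrArg (fun l => l.take m') h
  simp only [List.take_take, min_eq_left hm'] at h2
  rw [phi, List.take_reverse, List.length_map, hu, ← List.map_drop,
    List.drop_take, List.drop_drop] at h2
  have e1 : c - m + (m - m') = c - m' := by omega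
  have e2 : m - (m - m') = m' := by omega
  rw [e1, e2] at h2
  exact h2

lemma cmp_ge_iff (f : α → α) (w : List α) {c p : ℕ}
    (hpc : p ≤ c) (hcn : c + p ≤ w.length) :
    p ≤ cmpArr f w c ↔ phi f ((w.drop (c - p)).take p) = (w.drop c).take p := by
  set S : Set ℕ := {m : ℕ | m ≤ min c (w.length - c) ∧
    phi f ((w.drop (c - m)).take m) = (w.drop c).take m} with hS
  have hbdd : BddAbove S := ⟨min c (w.length - c), fun m hm => hm.1⟩
  constructor
  · intro h
    have hne : S.Nonempty := ⟨0, by simp [hS, phi]⟩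
    have hmem : sSup S ∈ S := Nat.sSup_mem hne hbdd
    exact phi_cond_mono f w h (le_trans hmem.1 (min_le_left _ _)) (by omega) hmem.2
  · intro h
    exact le_csSup hbdd ⟨by omega, h⟩

/-- decomposition of a prefix of length `k*p` into `k` blocks of length `p` -/
lemma take_mul_eq_flatten (L : List α) (g : ℕ → List α) (p : ℕ) :
    ∀ k, k * p ≤ L.length → (∀ j < k, (g j).length = p) →
    (L.take (k * p) = ((List.range k).map g).flatten ↔
      ∀ j < k, (L.drop (j * p)).take p = g j) := by
  intro k
  induction k with
  | zero => simp
  | succ k ih =>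
    intro hlen hg
    have hkp : k * p + p = (k + 1) * p := by ring
    have hlen' : k * p ≤ L.length := by omega
    have hg' : ∀ j < k, (g j).length = p := fun j hj => hg j (by omega)
    have hA : (L.take (k * p)).length = k * p := by
      rw [List.length_take]; omega
    have hC : (((List.range k).map g).flatten).length = k * p := by
      rw [List.length_flatten, List.map_map]
      have : (List.range k).map (List.length ∘ g) = List.replicate k p := by
        rw [List.eq_replicate_iff]
        refine ⟨by simp, ?_⟩
        intro b hb
        simp only [List.mem_map, List.mem_range, Function.comp] at hb
        obtain ⟨j, hj, rfl⟩ := hb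
        exact hg' j hj
      rw [this, List.sum_replicate, smul_eq_mul]
    rw [List.range_succ, List.map_append, List.flatten_append, ← hkp, List.take_add]
    simp only [List.map_cons, List.map_nil, List.flatten_cons, List.flatten_nil,
      List.append_nil]
    constructor
    · intro h
      have := List.append_inj h (by rw [hA, hC])
      intro j hj
      rcases Nat.lt_succ_iff_lt_or_eq.mp hj with hj' | rfl
      · exact (ih hlen' hg').mp this.1 j hj'
      · exact this.2
    · intro h
      have h1 : L.take (k * p) = ((List.range k).map g).flatten :=
        (ih hlen' hg').mpr fun j hj => h j (by omega)
      rw [h1, h k (by omega)]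

end Aux

/-- `w[i..i+kp−1] = b_1 b_2 ⋯ b_k` with `b_j = x` for odd `j` and
`b_j = φ(x)` for even `j` (where `x = w[i..i+p−1]`), iff `cmp_w[i+jp−1] ≥ p` for
all `1 ≤ j ≤ k−1`. -/
theorem stmt11 {α : Type*} (k : ℕ) (hk : 2 ≤ k) (f : α → α)
    (hf : Function.Involutive f) (w : List α) (i p : ℕ) (hi : 1 ≤ i) (hp : 1 ≤ p)
    (hle : i + k * p - 1 ≤ w.length) :
    ((w.drop (i - 1)).take (k * p) =
      ((List.range k).map fun j =>
        if j % 2 = 0 then (w.drop (i - 1)).take p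
        else phi f ((w.drop (i - 1)).take p)).flatten) ↔
      (∀ j, 1 ≤ j → j ≤ k - 1 → p ≤ cmpArr f w (i + j * p - 1)) := by
  set n := w.length with hn
  set x := (w.drop (i - 1)).take p with hx
  set L := w.drop (i - 1) with hL
  have hpk : p ≤ k * p := Nat.le_mul_of_pos_left p (by omega)
  have hLlen : L.length = n - (i - 1) := by simp [hL]; rfl
  have hkpL : k * p ≤ L.length := by omega
  have hxlen : x.length = p := by
    rw [hx, List.length_take, hLlen]; omega
  set g : ℕ → List α := fun j => if j % 2 = 0 then x else phi f x with hg
  have hglen : ∀ j < k, (g j).length = p := by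
    intro j _
    by_cases h : j % 2 = 0 <;> simp [hg, h, phi_length, hxlen]
  -- block structure
  have hblock : ∀ j, (w.drop (i - 1 + j * p)).take p = (L.drop (j * p)).take p := by
    intro j
    rw [hL, List.drop_drop]
  rw [take_mul_eq_flatten L g p k hkpL hglen]
  -- rewrite RHS using cmp_ge_iff
  have hcmp : ∀ j, 1 ≤ j → j ≤ k - 1 →
      (p ≤ cmpArr f w (i + j * p - 1) ↔
        phi f ((L.drop ((j - 1) * p)).take p) = (L.drop (j * p)).take p) := by
    intro j hj1 hj2
    obtain ⟨j', rfl⟩ : ∃ j', j = j' + 1 := ⟨j - 1, by omega⟩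
    have e1 : (j' + 1) * p = j' * p + p := by ring
    have e3 : j' * p + p + p ≤ k * p := by
      have : (j' + 2) * p ≤ k * p := Nat.mul_le_mul_right p (by omega)
      linarith [((by ring : (j' + 2) * p = j' * p + p + p) : _)]
    simp only [Nat.add_sub_cancel, e1]
    set a := j' * p with ha
    set b := k * p with hb2
    have hpc : p ≤ i + (a + p) - 1 := by omega
    have hcn : i + (a + p) - 1 + p ≤ n := by omega
    rw [cmp_ge_iff f w hpc hcn]
    have d1 : i + (a + p) - 1 - p = i - 1 + a := by omega
    have d2 : i + (a + p) - 1 = i - 1 + (a + p) := by omega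
    rw [d1, d2, hL, List.drop_drop, List.drop_drop]
  constructor
  · -- forward: blocks alternate ⇒ cmp large
    intro h j hj1 hj2
    rw [hcmp j hj1 hj2]
    have hb1 : (L.drop ((j - 1) * p)).take p = g (j - 1) := h (j - 1) (by omega)
    have hb2 : (L.drop (j * p)).take p = g j := h j (by omega)
    rw [hb1, hb2]
    obtain ⟨j', rfl⟩ : ∃ j', j = j' + 1 := ⟨j - 1, by omega⟩
    simp only [Nat.add_sub_cancel, hg]
    rcases Nat.even_or_odd j' with he | ho
    · have h1 : j' % 2 = 0 := Nat.even_iff.mp he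
      have h2 : ¬((j' + 1) % 2 = 0) := by omega
      simp [h1, h2]
    · have h1 : ¬(j' % 2 = 0) := by
        have := Nat.odd_iff.mp ho; omega
      have h2 : (j' + 1) % 2 = 0 := by
        have := Nat.odd_iff.mp ho; omega
      simp [h1, h2, phi_phi hf]
  · -- backward: cmp large ⇒ blocks alternate, by induction
    intro h j hj
    induction j with
    | zero =>
      show (L.drop (0 * p)).take p = g 0
      simp [hg, hx]
    | succ j ihj =>
      have hb : phi f ((L.drop (j * p)).take p) = (L.drop ((j + 1) * p)).take p := by
        have := (hcmp (j + 1) (by omega) (by omega)).mp (h (j + 1) (by omega) (by omega))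
        simpa using this
      have hbj : (L.drop (j * p)).take p = g j := ihj (by omega)
      rw [← hb, hbj, hg]
      rcases Nat.even_or_odd j with he | ho
      · have h1 : j % 2 = 0 := Nat.even_iff.mp he
        have h2 : ¬((j + 1) % 2 = 0) := by omega
        simp [h1, h2]
      · have h1 : ¬(j % 2 = 0) := by
          have := Nat.odd_iff.mp ho; omega
        have h2 : (j + 1) % 2 = 0 := by
          have := Nat.odd_iff.mp ho; omega
        simp [h1, h2, phi_phi hf]
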